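/- Let V be a vector space over a field 𝔽 equipped with an n-linear map f : V × … × V → V (n ≥ 2). For any basis ℬ = {e_i : i ∈ I} of V, the space V decomposes as the f-orthogonal direct sum of strongly f-invariant linear subspaces V = ⊕_{[V_{[e_i]}] ∈ ℱ/≈} ⌢V_{[e_i]}; that is, V is the internal direct sum of the subspaces ⌢V_{[e_i]}, distinct summands are pairwise f-orthogonal, and each summand is strongly f-invariant. -/

import Mathlib

/- Common setting: `V` is a vector space over a field `𝔽`, and `f` is an
`n`-linear map on `V` where `n = m + 1 ≥ 2` (i.e. `1 ≤ m`).  Tuples of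
length `n - 1 = m` index the last arguments of the set-valued map `F`. -/

open scoped Classical

noncomputable section

variable {𝔽 V I : Type*}

/-- The set `V* = V \ {0}` of nonzero vectors. -/
abbrev Vstar (V : Type*) [Zero V] := {v : V // v ≠ 0}

/-- The disjoint union `ℬ ∪̇ ℬ̄`, encoded by indices: `(false, i)` stands for the
basis vector `e i ∈ ℬ` and `(true, i)` for the formal bar symbol `ē i ∈ ℬ̄`. -/
abbrev BSym (I : Type*) := Bool × I

/-- The bar-swap on `ℬ ∪̇ ℬ̄`. -/
def barSwap {I : Type*} (s : BSym I) : BSym I := (!s.1, s.2)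

variable [Field 𝔽] [AddCommGroup V] [Module 𝔽 V] {m : ℕ}

/-- A basis vector, as an element of `V*`. -/
def bstar (b : Module.Basis I 𝔽 V) (i : I) : Vstar V := ⟨b i, b.ne_zero i⟩

/-- The set-valued map `F : 𝒫(V*) × (ℬ ∪̇ ℬ̄)^{n-1} → 𝒫(V*)` associated to the
`n`-linear map `f` and the basis `b` (here `n = m + 1`). -/
def Fmap (b : Module.Basis I 𝔽 V) (f : MultilinearMap 𝔽 (fun _ : Fin (m + 1) => V) V)
    (U : Set (Vstar V)) (ξ : Fin m → BSym I) : Set (Vstar V) :=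
  if ∀ t, (ξ t).1 = false then
    {w | ∃ (k : Fin (m + 1)) (σ : Equiv.Perm (Fin m)), ∃ u ∈ U,
      f (Fin.insertNth k u.1 fun t => b (ξ (σ t)).2) = w.1}
  else if ∀ t, (ξ t).1 = true then
    {w | ∃ (k : Fin (m + 1)) (σ : Equiv.Perm (Fin m)), ∃ u ∈ U,
      f (Fin.insertNth k w.1 fun t => b (ξ (σ t)).2) = u.1}
  else ∅

/-- Iterated application of `F` along a list of `(n-1)`-tuples. -/
def iterF (b : Module.Basis I 𝔽 V) (f : MultilinearMap 𝔽 (fun _ : Fin (m + 1) => V) V) :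
    Set (Vstar V) → List (Fin m → BSym I) → Set (Vstar V)
  | U, [] => U
  | U, X :: Xs => iterF b f (Fmap b f U X) Xs

/-- `X` is a connection from `e i` to `e j`.  (Since `F(∅,⋯) = ∅`, the requirement
that all intermediate iterated images are nonempty is equivalent to the final
image containing `e j`.) -/
def IsConnection (b : Module.Basis I 𝔽 V) (f : MultilinearMap 𝔽 (fun _ : Fin (m + 1) => V) V)
    (i j : I) (X : List (Fin m → BSym I)) : Prop :=
  X ≠ [] ∧ bstar b j ∈ iterF b f {bstar b i} X

/-- `e i` is connected to `e j`. -/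
def Connected (b : Module.Basis I 𝔽 V) (f : MultilinearMap 𝔽 (fun _ : Fin (m + 1) => V) V)
    (i j : I) : Prop :=
  i = j ∨ ∃ X : List (Fin m → BSym I), IsConnection b f i j X

/-- Two subspaces `W₁, W₂` are `f`-orthogonal. -/
def FOrthogonal (f : MultilinearMap 𝔽 (fun _ : Fin (m + 1) => V) V)
    (W₁ W₂ : Submodule 𝔽 V) : Prop :=
  ∀ k₁ k₂ : Fin (m + 1), k₁ ≠ k₂ →
    ∀ v : Fin (m + 1) → V, v k₁ ∈ W₁ → v k₂ ∈ W₂ → f v = 0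

/-- A subspace `W` is strongly `f`-invariant: `f(V,…,W,…,V) ⊆ W` for every slot. -/
def StronglyInvariant (f : MultilinearMap 𝔽 (fun _ : Fin (m + 1) => V) V)
    (W : Submodule 𝔽 V) : Prop :=
  ∀ (k : Fin (m + 1)) (v : Fin (m + 1) → V), v k ∈ W → f v ∈ W

/-- `V_{[e i]}`, the span of the connection class of `e i`. -/
def classSpan (b : Module.Basis I 𝔽 V) (f : MultilinearMap 𝔽 (fun _ : Fin (m + 1) => V) V)
    (i : I) : Submodule 𝔽 V :=
  Submodule.span 𝔽 (⇑b '' {j | Connected b f i j})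

/-- The projection `Π_{V_{[e c]}} : V → V_{[e c]}` relative to the decomposition
`V = ⊕ V_{[e i]}` (expressed through basis coordinates). -/
def projClass (b : Module.Basis I 𝔽 V) (f : MultilinearMap 𝔽 (fun _ : Fin (m + 1) => V) V)
    (c : I) : V →ₗ[𝔽] V :=
  b.constr 𝔽 fun j => if Connected b f c j then b j else 0

/-- One step of the relation `≈`: the sum over `k₁ < k₂` of
`Π_{V_{[c]}}(f(V,…,V_{[d]},…,V_{[d]},…,V)) + Π_{V_{[d]}}(f(V,…,V_{[c]},…,V_{[c]},…,V))`
is nonzero. -/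
def ApproxStep (b : Module.Basis I 𝔽 V) (f : MultilinearMap 𝔽 (fun _ : Fin (m + 1) => V) V)
    (c d : I) : Prop :=
  ∃ k₁ k₂ : Fin (m + 1), k₁ < k₂ ∧
    ((∃ v : Fin (m + 1) → V, v k₁ ∈ classSpan b f d ∧ v k₂ ∈ classSpan b f d ∧
        projClass b f c (f v) ≠ 0) ∨
     (∃ v : Fin (m + 1) → V, v k₁ ∈ classSpan b f c ∧ v k₂ ∈ classSpan b f c ∧
        projClass b f d (f v) ≠ 0))

/-- `V_{[e i]} ≈ V_{[e j]}`: either they coincide (same connection class) or they are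
linked by a finite chain of classes with nonvanishing projection sums. -/
def Approx (b : Module.Basis I 𝔽 V) (f : MultilinearMap 𝔽 (fun _ : Fin (m + 1) => V) V)
    (i j : I) : Prop :=
  Relation.ReflTransGen (fun c d => Connected b f c d ∨ ApproxStep b f c d) i j

/-- `⌢V_{[e i]} = ⊕_{V_{[e j]} ∈ [V_{[e i]}]} V_{[e j]}`. -/
def hatSpan (b : Module.Basis I 𝔽 V) (f : MultilinearMap 𝔽 (fun _ : Fin (m + 1) => V) V)
    (i : I) : Submodule 𝔽 V :=
  Submodule.span 𝔽 (⇑b '' {j | Approx b f i j})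

/-- Two decompositions of `V` as `f`-orthogonal direct sums of strongly `f`-invariant
subspaces (given as the sets of their summands) are isomorphic: there is a linear
automorphism `h` of `V` commuting with `f` carrying the summands of the first
bijectively onto the summands of the second. -/
def IsoDecomp (f : MultilinearMap 𝔽 (fun _ : Fin (m + 1) => V) V)
    (S T : Set (Submodule 𝔽 V)) : Prop :=
  ∃ h : V ≃ₗ[𝔽] V,
    (∀ v : Fin (m + 1) → V, f (fun k => h (v k)) = h (f v)) ∧
    (Submodule.map (h : V →ₗ[𝔽] V)) '' S = T

/-- `X` is a strongly `f'`-invariant subspace of `W`, where `f'` is the restriction of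
`f` to `W`: `f(W,…,X,…,W) ⊆ X` for every slot. -/
def SInvIn (f : MultilinearMap 𝔽 (fun _ : Fin (m + 1) => V) V)
    (W X : Submodule 𝔽 V) : Prop :=
  ∀ (k : Fin (m + 1)) (v : Fin (m + 1) → V), (∀ t, v t ∈ W) → v k ∈ X → f v ∈ X

/-- `W` is `f'`-simple, `f'` being the restriction of `f` to `W`: the restricted map is
nonzero and the only strongly `f'`-invariant subspaces of `W` are `0` and `W`. -/
def SimpleIn (f : MultilinearMap 𝔽 (fun _ : Fin (m + 1) => V) V)
    (W : Submodule 𝔽 V) : Prop :=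
  (∃ v : Fin (m + 1) → V, (∀ t, v t ∈ W) ∧ f v ≠ 0) ∧
  ∀ X : Submodule 𝔽 V, X ≤ W → SInvIn f W X → X = ⊥ ∨ X = W

/-- The annihilator of the restriction `f'` of `f` to `W`. -/
def annIn (f : MultilinearMap 𝔽 (fun _ : Fin (m + 1) => V) V)
    (W : Submodule 𝔽 V) : Set V :=
  {w | w ∈ W ∧ ∀ (k : Fin (m + 1)) (v : Fin (m + 1) → V),
    (∀ t, v t ∈ W) → v k = w → f v = 0}

/-- `𝓘(w)`: the smallest strongly `f'`-invariant subspace of `W` containing `w`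
(equivalently, the ideal of `(W, f')` generated by `w`). -/
def idealGenIn (f : MultilinearMap 𝔽 (fun _ : Fin (m + 1) => V) V)
    (W : Submodule 𝔽 V) (w : V) : Submodule 𝔽 V :=
  sInf {X : Submodule 𝔽 V | X ≤ W ∧ SInvIn f W X ∧ w ∈ X}

/-- `S` is an `i`-division basis of `W` with respect to the restriction `f'` of `f`:
whenever `c ∈ S`, `b₁, …, b_{n-1} ∈ W` and `f'(b₁,…,c,…,b_{n-1}) = w ≠ 0` with `c` in
some slot `k`, then `c, b₁, …, b_{n-1} ∈ 𝓘(w)`. -/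
def IDivisionBasisIn (f : MultilinearMap 𝔽 (fun _ : Fin (m + 1) => V) V)
    (W : Submodule 𝔽 V) (S : Set V) : Prop :=
  ∀ c ∈ S, ∀ (k : Fin (m + 1)) (v : Fin (m + 1) → V),
    (∀ t, v t ∈ W) → v k = c → f v ≠ 0 → ∀ t, v t ∈ idealGenIn f W (f v)


section AuxLemmas

variable (b : Module.Basis I 𝔽 V) (f : MultilinearMap 𝔽 (fun _ : Fin (m + 1) => V) V)

lemma Fmap_mono {U U' : Set (Vstar V)} (h : U ⊆ U') (ξ : Fin m → BSym I) :
    Fmap b f U ξ ⊆ Fmap b f U' ξ := by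
  unfold Fmap
  split_ifs with h1 h2
  · rintro w ⟨k, σ, u, hu, he⟩; exact ⟨k, σ, u, h hu, he⟩
  · rintro w ⟨k, σ, u, hu, he⟩; exact ⟨k, σ, u, h hu, he⟩
  · exact subset_rfl

lemma iterF_mono : ∀ (X : List (Fin m → BSym I)) {U U' : Set (Vstar V)},
    U ⊆ U' → iterF b f U X ⊆ iterF b f U' X
  | [], _, _, h => h
  | ξ :: Xs, _, _, h => iterF_mono Xs (Fmap_mono b f h ξ)

lemma Fmap_exists {U : Set (Vstar V)} {w : Vstar V} {ξ : Fin m → BSym I}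
    (hw : w ∈ Fmap b f U ξ) : ∃ u ∈ U, w ∈ Fmap b f {u} ξ := by
  unfold Fmap at hw ⊢
  split_ifs at hw ⊢ with h1 h2
  · obtain ⟨k, σ, u, hu, he⟩ := hw
    exact ⟨u, hu, ⟨k, σ, u, rfl, he⟩⟩
  · obtain ⟨k, σ, u, hu, he⟩ := hw
    exact ⟨u, hu, ⟨k, σ, u, rfl, he⟩⟩
  · exact absurd hw (Set.notMem_empty w)

lemma iterF_exists : ∀ (X : List (Fin m → BSym I)) {U : Set (Vstar V)} {w : Vstar V},
    w ∈ iterF b f U X → ∃ u ∈ U, w ∈ iterF b f {u} X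
  | [], _, w, hw => ⟨w, hw, rfl⟩
  | ξ :: Xs, U, w, hw => by
      obtain ⟨u', hu', hw'⟩ := iterF_exists Xs hw
      obtain ⟨u, hu, hu'2⟩ := Fmap_exists b f hu'
      exact ⟨u, hu, iterF_mono b f Xs (Set.singleton_subset_iff.2 hu'2) hw'⟩

lemma iterF_append : ∀ (X Y : List (Fin m → BSym I)) (U : Set (Vstar V)),
    iterF b f U (X ++ Y) = iterF b f (iterF b f U X) Y
  | [], _, _ => rfl
  | _ :: Xs, Y, _ => iterF_append Xs Y _

lemma Fmap_rev (hm : 1 ≤ m) {u w : Vstar V} {ξ : Fin m → BSym I}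
    (hw : w ∈ Fmap b f {u} ξ) : u ∈ Fmap b f {w} (fun t => barSwap (ξ t)) := by
  unfold Fmap at hw ⊢
  split_ifs at hw with h1 h2
  · rw [if_neg (fun h => by simpa [barSwap, h1 ⟨0, hm⟩] using h ⟨0, hm⟩),
      if_pos (fun t => by simp [barSwap, h1 t])]
    obtain ⟨k, σ, u', hu', he⟩ := hw
    rw [Set.mem_singleton_iff] at hu'; subst hu'
    exact ⟨k, σ, w, rfl, he⟩
  · rw [if_pos (fun t => by simp [barSwap, h2 t])]
    obtain ⟨k, σ, u', hu', he⟩ := hw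
    rw [Set.mem_singleton_iff] at hu'; subst hu'
    exact ⟨k, σ, w, rfl, he⟩
  · exact absurd hw (Set.notMem_empty w)

lemma iterF_rev (hm : 1 ≤ m) : ∀ (X : List (Fin m → BSym I)) {u w : Vstar V},
    w ∈ iterF b f {u} X →
      u ∈ iterF b f {w} ((X.map (fun ξ t => barSwap (ξ t))).reverse)
  | [], u, w, hw => by
      have hw' : w = u := hw
      subst hw'; exact rfl
  | ξ :: Xs, u, w, hw => by
      obtain ⟨u', hu', hw'⟩ := iterF_exists b f Xs hw
      have h1 := iterF_rev hm Xs hw'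
      have h2 := Fmap_rev b f hm hu'
      rw [List.map_cons, List.reverse_cons, iterF_append]
      exact Fmap_mono b f (Set.singleton_subset_iff.2 h1) _ h2

lemma Connected.symm' (hm : 1 ≤ m) {i j : I} (h : Connected b f i j) :
    Connected b f j i := by
  rcases h with rfl | ⟨X, hX, hmem⟩
  · exact Or.inl rfl
  · exact Or.inr ⟨(X.map (fun ξ t => barSwap (ξ t))).reverse, by simpa using hX,
      iterF_rev b f hm X hmem⟩

lemma connected_of_ne_zero (hm : 1 ≤ m) (a : Fin (m + 1) → I)
    (hne : f (fun t => b (a t)) ≠ 0) {s t : Fin (m + 1)} (_hst : s ≠ t) :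
    Connected b f (a s) (a t) := by
  have hv : ∀ k : Fin (m + 1),
      Fin.insertNth k (b (a k)) (fun r => b (a (k.succAbove r))) = fun t => b (a t) :=
    fun k => Fin.insertNth_eq_iff.2 ⟨rfl, rfl⟩
  refine Or.inr ⟨[fun r => (false, a (s.succAbove r)), fun r => (true, a (t.succAbove r))],
    by simp, ?_⟩
  show bstar b (a t) ∈ Fmap b f (Fmap b f {bstar b (a s)} _) _
  have hw : (⟨f (fun t => b (a t)), hne⟩ : Vstar V) ∈
      Fmap b f {bstar b (a s)} (fun r => (false, a (s.succAbove r))) := by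
    unfold Fmap
    rw [if_pos (fun r => rfl)]
    exact ⟨s, Equiv.refl _, bstar b (a s), rfl, congrArg f (hv s)⟩
  refine Fmap_mono b f (Set.singleton_subset_iff.2 hw) _ ?_
  unfold Fmap
  rw [if_neg (fun h => by simpa using h ⟨0, hm⟩), if_pos (fun r => rfl)]
  exact ⟨t, Equiv.refl _, ⟨f (fun t => b (a t)), hne⟩, rfl, congrArg f (hv t)⟩

lemma ApproxStep.symm' {c d : I} (h : ApproxStep b f c d) : ApproxStep b f d c := by
  obtain ⟨k₁, k₂, hlt, h | h⟩ := h
  · exact ⟨k₁, k₂, hlt, Or.inr h⟩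
  · exact ⟨k₁, k₂, hlt, Or.inl h⟩

lemma Approx.symm' (hm : 1 ≤ m) {i j : I} (h : Approx b f i j) : Approx b f j i := by
  refine @Std.Symm.symm _ _ (@Relation.ReflTransGen.stdSymm _ _ ⟨?_⟩) _ _ h
  intro c d hcd
  rcases hcd with hc | hc
  · exact Or.inl (Connected.symm' b f hm hc)
  · exact Or.inr (ApproxStep.symm' b f hc)

lemma hatSpan_eq_of_approx (hm : 1 ≤ m) {i j : I} (h : Approx b f i j) :
    hatSpan b f i = hatSpan b f j := by
  unfold hatSpan
  have : {p | Approx b f i p} = {p | Approx b f j p} := by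
    ext p
    exact ⟨fun hp => (Approx.symm' b f hm h).trans hp, fun hp => h.trans hp⟩
  rw [this]

lemma multilinear_span_induction (W : Submodule 𝔽 V) (S : Fin (m + 1) → Set V)
    (H : ∀ v : Fin (m + 1) → V, (∀ t, v t ∈ S t) → f v ∈ W) :
    ∀ v : Fin (m + 1) → V, (∀ t, v t ∈ Submodule.span 𝔽 (S t)) → f v ∈ W := by
  suffices h : ∀ s : Finset (Fin (m + 1)), ∀ v : Fin (m + 1) → V,
      (∀ t, if t ∈ s then v t ∈ Submodule.span 𝔽 (S t) else v t ∈ S t) → f v ∈ W by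
    intro v hv
    exact h Finset.univ v (fun t => by simpa using hv t)
  intro s
  induction s using Finset.induction_on with
  | empty => exact fun v hv => H v (fun t => by simpa using hv t)
  | @insert t₀ s ht₀ ih =>
    intro v hv
    have hv0 : v t₀ ∈ Submodule.span 𝔽 (S t₀) := by
      have := hv t₀; rwa [if_pos (Finset.mem_insert_self t₀ s)] at this
    have key : Submodule.span 𝔽 (S t₀) ≤ W.comap (f.toLinearMap v t₀) := by
      rw [Submodule.span_le]
      intro x hx
      simp only [Set.mem_setOf_eq, SetLike.mem_coe, Submodule.mem_comap,
        MultilinearMap.toLinearMap_apply]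
      apply ih
      intro t
      by_cases h : t = t₀
      · subst h
        rw [if_neg ht₀, Function.update_self]
        exact hx
      · rw [Function.update_of_ne h]
        by_cases hts : t ∈ s
        · rw [if_pos hts]
          have := hv t
          rwa [if_pos (Finset.mem_insert_of_mem hts)] at this
        · rw [if_neg hts]
          have := hv t
          rwa [if_neg (by simp [h, hts])] at this
    have := key hv0
    simpa [Function.update_eq_self] using this

lemma projClass_repr (c : I) (x : V) :
    b.repr (projClass b f c x) c = b.repr x c := by
  rw [projClass, Module.Basis.constr_apply, map_finsuppSum, Finsupp.sum_apply, Finsupp.sum]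
  have step : ∀ j ∈ (b.repr x).support,
      (b.repr ((b.repr x) j • if Connected b f c j then b j else (0 : V))) c
        = if j = c then (b.repr x) c else 0 := by
    intro j hj
    by_cases hjc : j = c
    · subst hjc
      have hconn : Connected b f j j := Or.inl rfl
      rw [if_pos rfl, if_pos hconn, map_smul, b.repr_self,
        Finsupp.smul_apply, Finsupp.single_eq_same, smul_eq_mul, mul_one]
    · rw [if_neg hjc]
      split_ifs with hcj
      · rw [map_smul, b.repr_self, Finsupp.smul_apply, Finsupp.single_eq_of_ne (Ne.symm hjc),
          smul_zero]
      · rw [smul_zero, map_zero, Finsupp.coe_zero, Pi.zero_apply]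
  rw [Finset.sum_congr rfl step,
    Finset.sum_ite_eq' (b.repr x).support c (fun _ => (b.repr x) c)]
  split_ifs with h
  · rfl
  · exact (Finsupp.notMem_support_iff.1 h).symm

lemma stronglyInvariant_hatSpan (hm : 1 ≤ m) (i : I) :
    StronglyInvariant f (hatSpan b f i) := by
  intro k v hv
  refine multilinear_span_induction f (hatSpan b f i)
    (fun t => if t = k then ⇑b '' {a | Approx b f i a} else Set.range ⇑b) ?_ v ?_
  · intro w hw
    have hk : w k ∈ ⇑b '' {a | Approx b f i a} := by
      simpa using hw k
    obtain ⟨ak, hak, hbk⟩ := hk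
    choose a ha using fun t => show ∃ p, b p = w t by
      by_cases h : t = k
      · exact ⟨ak, by rw [h, hbk]⟩
      · simpa [h] using hw t
    have hw_eq : w = fun t => b (a t) := funext fun t => (ha t).symm
    have hak' : Approx b f i (a k) := by
      have hba : a k = ak := b.injective (by rw [ha k, hbk])
      rwa [hba]
    rw [hw_eq]
    by_cases hz : f (fun t => b (a t)) = 0
    · rw [hz]; exact Submodule.zero_mem _
    · rw [hatSpan, Module.Basis.mem_span_image]
      intro p hp
      rw [Finset.mem_coe, Finsupp.mem_support_iff] at hp
      show Approx b f i p
      refine hak'.trans (Relation.ReflTransGen.single (Or.inr ?_))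
      have h01 : (0 : Fin (m + 1)) < 1 := by
        rw [Fin.lt_def, Fin.val_zero, Fin.val_one', Nat.mod_eq_of_lt (by omega)]
        exact Nat.one_pos
      have hc : ∀ t, Connected b f (a k) (a t) := fun t => by
        by_cases h : k = t
        · exact Or.inl (congrArg a h)
        · exact connected_of_ne_zero b f hm a hz h
      refine ⟨0, 1, h01, Or.inr ⟨fun t => b (a t),
        Submodule.subset_span ⟨a 0, hc 0, rfl⟩,
        Submodule.subset_span ⟨a 1, hc 1, rfl⟩, ?_⟩⟩
      intro h0
      have := projClass_repr b f p (f fun t => b (a t))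
      rw [h0, map_zero, Finsupp.coe_zero, Pi.zero_apply] at this
      exact hp this.symm
  · intro t
    by_cases h : t = k
    · subst h; simpa [hatSpan] using hv
    · simp [h, b.span_eq]

lemma orthogonal_hatSpan (hm : 1 ≤ m) {i j : I} (hij : ¬ Approx b f i j) :
    FOrthogonal f (hatSpan b f i) (hatSpan b f j) := by
  intro k₁ k₂ hk v hv1 hv2
  have hbot : f v ∈ (⊥ : Submodule 𝔽 V) := by
    refine multilinear_span_induction f ⊥
      (fun t => if t = k₁ then ⇑b '' {a | Approx b f i a}
        else if t = k₂ then ⇑b '' {a | Approx b f j a} else Set.range ⇑b) ?_ v ?_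
    · intro w hw
      have hk1 : w k₁ ∈ ⇑b '' {a | Approx b f i a} := by
        simpa using hw k₁
      have hk2 : w k₂ ∈ ⇑b '' {a | Approx b f j a} := by
        simpa [Ne.symm hk] using hw k₂
      obtain ⟨c, hc, hbc⟩ := hk1
      obtain ⟨d, hd, hbd⟩ := hk2
      choose a ha using fun t => show ∃ p, b p = w t by
        by_cases h1 : t = k₁
        · exact ⟨c, by rw [h1, hbc]⟩
        · by_cases h2 : t = k₂
          · exact ⟨d, by rw [h2, hbd]⟩
          · simpa [h1, h2] using hw t
      have hw_eq : w = fun t => b (a t) := funext fun t => (ha t).symm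
      have hac : a k₁ = c := b.injective (by rw [ha k₁, hbc])
      have had : a k₂ = d := b.injective (by rw [ha k₂, hbd])
      rw [hw_eq, Submodule.mem_bot]
      by_contra hz
      have hcd : Connected b f (a k₁) (a k₂) := connected_of_ne_zero b f hm a hz hk
      refine hij ?_
      refine Relation.ReflTransGen.trans ?_ (Approx.symm' b f hm (had ▸ hd))
      exact Relation.ReflTransGen.trans (hac ▸ hc)
        (Relation.ReflTransGen.single (Or.inl hcd))
    · intro t
      by_cases h1 : t = k₁
      · subst h1; simpa [hatSpan] using hv1
      · by_cases h2 : t = k₂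
        · subst h2; simpa [Ne.symm hk, hatSpan] using hv2
        · simp [h1, h2, b.span_eq]
  simpa using hbot

end AuxLemmas

/-- first decomposition theorem. -/
theorem stmt9 (hm : 1 ≤ m) (b : Module.Basis I 𝔽 V)
    (f : MultilinearMap 𝔽 (fun _ : Fin (m + 1) => V) V) :
    iSupIndep (fun W : {W : Submodule 𝔽 V // ∃ i, W = hatSpan b f i} => W.1) ∧
    (⨆ W : {W : Submodule 𝔽 V // ∃ i, W = hatSpan b f i}, W.1) = ⊤ ∧
    (∀ W₁ W₂ : {W : Submodule 𝔽 V // ∃ i, W = hatSpan b f i},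
      W₁ ≠ W₂ → FOrthogonal f W₁.1 W₂.1) ∧
    (∀ i, StronglyInvariant f (hatSpan b f i)) := by
  refine ⟨?_, ?_, ?_, fun i => stronglyInvariant_hatSpan b f hm i⟩
  · intro W
    obtain ⟨i, hi⟩ := W.2
    have hle : (⨆ W', ⨆ _ : W' ≠ W, W'.1) ≤
        Submodule.span 𝔽 (⇑b '' {p | ¬ Approx b f i p}) := by
      refine iSup₂_le fun W' hW' => ?_
      obtain ⟨j, hj⟩ := W'.2
      rw [hj, hatSpan]
      refine Submodule.span_mono (Set.image_mono ?_)
      intro p hp hip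
      refine hW' (Subtype.ext ?_)
      rw [hj, hi]
      exact hatSpan_eq_of_approx b f hm (hp.trans (Approx.symm' b f hm hip))
    refine Disjoint.mono_right hle ?_
    show Disjoint W.1 _
    rw [hi, hatSpan, Submodule.disjoint_def]
    intro x hx1 hx2
    have h1 := b.mem_span_image.1 hx1
    have h2 := b.mem_span_image.1 hx2
    have hsupp : (b.repr x).support = ∅ :=
      Finset.eq_empty_iff_forall_notMem.2 fun p hp =>
        h2 (Finset.mem_coe.2 hp) (h1 (Finset.mem_coe.2 hp))
    exact b.repr.map_eq_zero_iff.1 (Finsupp.support_eq_empty.1 hsupp)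
  · refine le_antisymm le_top ?_
    rw [← b.span_eq, Submodule.span_le]
    rintro x ⟨j, rfl⟩
    have hj : b j ∈ hatSpan b f j :=
      Submodule.subset_span ⟨j, Relation.ReflTransGen.refl, rfl⟩
    exact (le_iSup (fun W : {W : Submodule 𝔽 V // ∃ i, W = hatSpan b f i} => W.1)
      ⟨hatSpan b f j, j, rfl⟩) hj
  · intro W₁ W₂ hne
    obtain ⟨i, hi⟩ := W₁.2
    obtain ⟨j, hj⟩ := W₂.2
    rw [hi, hj]
    refine orthogonal_hatSpan b f hm ?_
    intro hij
    exact hne (Subtype.ext (by rw [hi, hj, hatSpan_eq_of_approx b f hm hij]))
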